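/- Let G be a daisy cube of dimension n, i.e., the subgraph of the hypercube Q_n induced by a nonempty downward-closed vertex set V ⊆ {0,1}^n, and for i ∈ {1,…,n} let |E_i| be the number of edges of G using direction i. Then the Mostar index of G satisfies Mo(G) = |V(G)|·|E(G)| − 2·Σ_{i=1}^n |E_i|². -/

import Mathlib

/-- Vertices of the hypercube `Q_n`: binary strings of length `n`. -/
abbrev Vtx (n : ℕ) := Fin n → Bool

/-- The subgraph of the hypercube `Q_n` induced by a set `V` of vertices:
two vertices are adjacent iff they differ in precisely one coordinate
(i.e. their Hamming distance is `1`). -/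
def cubeGraph {n : ℕ} (V : Finset (Vtx n)) : SimpleGraph {u : Vtx n // u ∈ V} where
  Adj u v := hammingDist u.1 v.1 = 1
  symm := ⟨fun u v h => (hammingDist_comm v.1 u.1).trans h⟩
  loopless := ⟨fun u h => by simp [hammingDist_self] at h⟩

instance {n : ℕ} {V : Finset (Vtx n)} : DecidableRel (cubeGraph V).Adj :=
  fun u v => inferInstanceAs (Decidable (hammingDist u.1 v.1 = 1))

/-- A set of vertices of `Q_n` is downward closed if `u ≤ v` componentwise
and `v ∈ V` imply `u ∈ V`. -/
def DownClosed {n : ℕ} (V : Finset (Vtx n)) : Prop :=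
  ∀ u v : Vtx n, (∀ i, u i ≤ v i) → v ∈ V → u ∈ V

/-- `closerCount G u v` is the number of vertices of `G` strictly closer
(in graph distance) to `u` than to `v`. -/
noncomputable def closerCount {α : Type*} (G : SimpleGraph α) (u v : α) : ℕ :=
  Nat.card {w : α // G.dist w u < G.dist w v}

/-- The Mostar index: `∑_{uv ∈ E(G)} |n_{u,v} - n_{v,u}|`. -/
noncomputable def mostar {α : Type*} [Fintype α] [DecidableEq α] (G : SimpleGraph α)
    [DecidableRel G.Adj] : ℕ :=
  ∑ e ∈ G.edgeFinset,
    Sym2.lift ⟨fun u v => ((closerCount G u v : ℤ) - (closerCount G v u : ℤ)).natAbs,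
      fun a b => by
        show (_ - _ : ℤ).natAbs = (_ - _ : ℤ).natAbs
        rw [← Int.natAbs_neg, neg_sub]⟩ e

/-- The set of edges of the induced subgraph on `V` using direction `i`,
i.e. whose endpoints differ in coordinate `i`. -/
def dirEdges {n : ℕ} (V : Finset (Vtx n)) (i : Fin n) : Finset (Sym2 {u : Vtx n // u ∈ V}) :=
  (cubeGraph V).edgeFinset.filter
    (fun e => Sym2.lift ⟨fun u v => decide (u.1 i ≠ v.1 i),
      fun u v => by rw [decide_eq_decide]; exact ne_comm⟩ e = true)

open Finset

variable {n : ℕ}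

lemma hamming_update_one (u : Vtx n) (i : Fin n) (b : Bool) (h : u i ≠ b) :
    hammingDist u (Function.update u i b) = 1 := by
  have : (Finset.univ.filter fun j => u j ≠ Function.update u i b j) = {i} := by
    ext j
    by_cases hj : j = i <;> simp [Function.update_apply, hj, h]
  rw [hammingDist, this, Finset.card_singleton]

lemma hamming_update_step (u v : Vtx n) (i : Fin n) (h : u i ≠ v i) :
    hammingDist (Function.update u i (v i)) v + 1 = hammingDist u v := by
  have hset : (Finset.univ.filter fun j => Function.update u i (v i) j ≠ v j)
      = (Finset.univ.filter fun j => u j ≠ v j).erase i := by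
    ext j
    by_cases hj : j = i <;> simp [Function.update_apply, hj]
  rw [hammingDist, hammingDist, hset, Finset.card_erase_add_one (by simp [h])]

variable {V : Finset (Vtx n)}

lemma exists_walk (hdc : DownClosed V) :
    ∀ (k : ℕ) (u v : Vtx n) (hu : u ∈ V) (hv : v ∈ V), hammingDist u v = k →
      ∃ w : (cubeGraph V).Walk ⟨u, hu⟩ ⟨v, hv⟩, w.length = k := by
  intro k
  induction k with
  | zero =>
    intro u v hu hv h
    obtain rfl := hammingDist_eq_zero.mp h
    exact ⟨.nil, rfl⟩
  | succ k ih =>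
    intro u v hu hv h
    by_cases hex : ∃ j, u j = true ∧ v j = false
    · obtain ⟨j, hju, hjv⟩ := hex
      have hne : u j ≠ v j := by simp [hju, hjv]
      have hu'V : Function.update u j (v j) ∈ V := by
        refine hdc _ u (fun l => ?_) hu
        by_cases hl : l = j <;> simp [Function.update_apply, hl, hjv]
      have hadj : (cubeGraph V).Adj ⟨u, hu⟩ ⟨_, hu'V⟩ := hamming_update_one u j (v j) hne
      have hk : hammingDist (Function.update u j (v j)) v = k := by
        have := hamming_update_step u v j hne; omega
      obtain ⟨w, hw⟩ := ih _ v hu'V hv hk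
      exact ⟨.cons hadj w, by simp [hw]⟩
    · push_neg at hex
      have hle : ∀ l, u l ≤ v l := by
        intro l
        cases hul : u l
        · exact Bool.false_le _
        · cases hvl : v l
          · exact absurd hvl (hex l hul)
          · exact le_refl _
      have hne' : u ≠ v := by
        intro heq; rw [heq, hammingDist_self] at h; omega
      obtain ⟨i, hi⟩ := Function.ne_iff.mp hne'
      have hu'V : Function.update u i (v i) ∈ V := by
        refine hdc _ v (fun l => ?_) hv
        by_cases hl : l = i <;> simp [Function.update_apply, hl, hle]
      have hadj : (cubeGraph V).Adj ⟨u, hu⟩ ⟨_, hu'V⟩ := hamming_update_one u i (v i) hi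
      have hk : hammingDist (Function.update u i (v i)) v = k := by
        have := hamming_update_step u v i hi; omega
      obtain ⟨w, hw⟩ := ih _ v hu'V hv hk
      exact ⟨.cons hadj w, by simp [hw]⟩

lemma hamming_le_length {a b : {u : Vtx n // u ∈ V}} (w : (cubeGraph V).Walk a b) :
    hammingDist a.1 b.1 ≤ w.length := by
  induction w with
  | nil => simp [hammingDist_self]
  | @cons x y z h p ih =>
    have htri := hammingDist_triangle x.1 y.1 z.1
    have hxy : hammingDist x.1 y.1 = 1 := h
    simp only [SimpleGraph.Walk.length_cons]
    omega

lemma cube_dist_eq (hdc : DownClosed V) (a b : {u : Vtx n // u ∈ V}) :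
    (cubeGraph V).dist a b = hammingDist a.1 b.1 := by
  obtain ⟨w, hw⟩ := exists_walk hdc (hammingDist a.1 b.1) a.1 b.1 a.2 b.2 rfl
  have h1 : (cubeGraph V).dist a b ≤ hammingDist a.1 b.1 := hw ▸ SimpleGraph.dist_le w
  have hr : (cubeGraph V).Reachable a b := ⟨w⟩
  obtain ⟨p, hp⟩ := hr.exists_walk_length_eq_dist
  have h2 := hamming_le_length p
  omega

lemma exists_dir {u v : Vtx n} (h : hammingDist u v = 1) :
    ∃ i, u i ≠ v i ∧ ∀ j, j ≠ i → u j = v j := by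
  rw [hammingDist] at h
  obtain ⟨i, hi⟩ := Finset.card_eq_one.mp h
  refine ⟨i, ?_, fun j hj => ?_⟩
  · have : i ∈ ({i} : Finset (Fin n)) := Finset.mem_singleton_self i
    rw [← hi] at this
    simpa using this
  · by_contra hne
    have : j ∈ (Finset.univ.filter fun l => u l ≠ v l) := by simpa using hne
    rw [hi] at this
    exact hj (Finset.mem_singleton.mp this)

lemma closer_iff {u v : Vtx n} (i : Fin n) (hi : u i ≠ v i) (hj : ∀ j, j ≠ i → u j = v j)
    (w : Vtx n) : hammingDist w u < hammingDist w v ↔ w i = u i := by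
  have herase : (Finset.univ.filter fun j => w j ≠ u j).erase i
      = (Finset.univ.filter fun j => w j ≠ v j).erase i := by
    ext j
    by_cases hji : j = i
    · simp [hji]
    · simp [Finset.mem_erase, hji, hj j hji]
  have hmem : ∀ x : Vtx n, w i ≠ x i →
      (Finset.univ.filter fun j => w j ≠ x j).card
      = ((Finset.univ.filter fun j => w j ≠ x j).erase i).card + 1 := by
    intro x h
    rw [Finset.card_erase_add_one (by simp [h])]
  have hnmem : ∀ x : Vtx n, w i = x i →
      (Finset.univ.filter fun j => w j ≠ x j).card
      = ((Finset.univ.filter fun j => w j ≠ x j).erase i).card := by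
    intro x h
    rw [Finset.erase_eq_of_notMem (by simp [h])]
  rw [hammingDist, hammingDist]
  by_cases hwu : w i = u i
  · have hwv : w i ≠ v i := fun h => hi (hwu.symm.trans h)
    rw [hnmem u hwu, hmem v hwv, herase]
    simp [hwu]
  · have hwv : w i = v i := by
      revert hi hwu; cases w i <;> cases u i <;> cases v i <;> simp
    rw [hmem u hwu, hnmem v hwv, herase]
    simp [hwu]

lemma closerCount_eq (hdc : DownClosed V) {a b : {u : Vtx n // u ∈ V}} (i : Fin n)
    (hi : a.1 i ≠ b.1 i) (hj : ∀ j, j ≠ i → a.1 j = b.1 j) :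
    closerCount (cubeGraph V) a b = (V.filter fun w => w i = a.1 i).card := by
  classical
  have hiff : ∀ w : {u : Vtx n // u ∈ V},
      ((cubeGraph V).dist w a < (cubeGraph V).dist w b) ↔ w.1 i = a.1 i := by
    intro w
    rw [cube_dist_eq hdc, cube_dist_eq hdc]
    exact closer_iff i hi hj w.1
  rw [closerCount, Nat.card_eq_fintype_card,
    Fintype.card_congr (Equiv.subtypeEquivRight hiff), Fintype.card_subtype]
  refine Finset.card_bij (fun w _ => w.1) ?_ ?_ ?_
  · intro w hw
    simp only [Finset.mem_filter, Finset.mem_univ, true_and] at hw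
    exact Finset.mem_filter.mpr ⟨w.2, hw⟩
  · intro w₁ _ w₂ _ h
    exact Subtype.ext h
  · intro w hw
    simp only [Finset.mem_filter] at hw
    exact ⟨⟨w, hw.1⟩, by simp [hw.2], rfl⟩

lemma flip_mem (hdc : DownClosed V) {w : Vtx n} (hw : w ∈ V) (i : Fin n) :
    Function.update w i false ∈ V := by
  refine hdc _ w (fun l => ?_) hw
  by_cases hl : l = i <;> simp [Function.update_apply, hl]

lemma count_le (hdc : DownClosed V) (i : Fin n) :
    (V.filter fun w => w i = true).card ≤ (V.filter fun w => w i = false).card := by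
  apply Finset.card_le_card_of_injOn (fun w => Function.update w i false)
  · intro w hw
    simp only [Finset.coe_filter, Set.mem_setOf_eq, Finset.mem_filter] at hw ⊢
    exact ⟨flip_mem hdc hw.1 i, by simp⟩
  · intro a ha b hb hab
    simp only [Finset.coe_filter, Set.mem_setOf_eq] at ha hb
    funext l
    by_cases hl : l = i
    · rw [hl, ha.2, hb.2]
    · have := congrFun hab l
      simpa [Function.update_apply, hl] using this

lemma count_add (i : Fin n) :
    (V.filter fun w => w i = false).card + (V.filter fun w => w i = true).card = V.card := by
  classical
  have h1 := Finset.card_filter_add_card_filter_not (s := V) (p := fun w => w i = false)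
  have h2 : V.filter (fun w => ¬ w i = false) = V.filter (fun w => w i = true) := by
    apply Finset.filter_congr
    intro w _
    simp [Bool.not_eq_false]
  rw [h2] at h1
  exact h1
lemma mem_dirEdges {i : Fin n} {a b : {u : Vtx n // u ∈ V}} :
    s(a, b) ∈ dirEdges V i ↔ (cubeGraph V).Adj a b ∧ a.1 i ≠ b.1 i := by
  rw [dirEdges, Finset.mem_filter, SimpleGraph.mem_edgeFinset, SimpleGraph.mem_edgeSet,
    Sym2.lift_mk]
  simp

lemma adj_dir {a b : Vtx n} (h : hammingDist a b = 1) (i : Fin n) (hi : a i ≠ b i) :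
    ∀ j, j ≠ i → a j = b j := by
  obtain ⟨i', hi', hj'⟩ := exists_dir h
  have hii : i = i' := by
    by_contra hne
    exact hi (hj' i hne)
  subst hii
  exact hj'

lemma eq_update {a b : Vtx n} (i : Fin n) (hj : ∀ j, j ≠ i → a j = b j) (hbi : b i = false) :
    b = Function.update a i false := by
  funext j
  by_cases hl : j = i
  · subst hl; simpa using hbi
  · simp [Function.update_apply, hl, (hj j hl).symm]

lemma dirEdges_card (hdc : DownClosed V) (i : Fin n) :
    (dirEdges V i).card = (V.filter fun w => w i = true).card := by
  classical
  symm
  refine Finset.card_bij (fun w hw => s(⟨w, (Finset.mem_filter.mp hw).1⟩,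
      ⟨Function.update w i false, flip_mem hdc (Finset.mem_filter.mp hw).1 i⟩)) ?_ ?_ ?_
  · intro w hw
    have hwt := (Finset.mem_filter.mp hw).2
    refine mem_dirEdges.mpr ⟨?_, ?_⟩
    · exact hamming_update_one w i false (by simp [hwt])
    · simp [hwt]
  · intro w₁ h₁ w₂ h₂ heq
    have ht₁ := (Finset.mem_filter.mp h₁).2
    have ht₂ := (Finset.mem_filter.mp h₂).2
    rw [Sym2.eq_iff] at heq
    rcases heq with ⟨h, _⟩ | ⟨h, _⟩
    · exact congrArg Subtype.val h
    · have := congrFun (congrArg Subtype.val h) i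
      simp [ht₁] at this
  · intro e he
    have he' := he
    revert he'
    refine Sym2.inductionOn e (fun a b => ?_) 
    intro hab
    obtain ⟨hadj, hd⟩ := mem_dirEdges.mp hab
    have hj := adj_dir hadj i hd
    cases ha : a.1 i
    · have hb : b.1 i = true := by
        cases hbv : b.1 i
        · rw [ha, hbv] at hd; simp at hd
        · rfl
      refine ⟨b.1, Finset.mem_filter.mpr ⟨b.2, hb⟩, ?_⟩
      have hupd : a = ⟨Function.update b.1 i false, flip_mem hdc b.2 i⟩ := by
        refine Subtype.ext ?_
        exact eq_update i (fun j hjne => (hj j hjne).symm) ha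
      rw [Sym2.eq_swap (a := a)]
      exact congrArg (fun x => s(b, x)) hupd.symm
    · refine ⟨a.1, Finset.mem_filter.mpr ⟨a.2, ha⟩, ?_⟩
      have hb : b.1 i = false := by
        cases hbv : b.1 i
        · rfl
        · rw [ha, hbv] at hd; simp at hd
      have hupd : b = ⟨Function.update a.1 i false, flip_mem hdc a.2 i⟩ :=
        Subtype.ext (eq_update i hj hb)
      exact congrArg (fun x => s(a, x)) hupd.symm

lemma dir_unique {e : Sym2 {u : Vtx n // u ∈ V}} (he : e ∈ (cubeGraph V).edgeFinset) :
    ∃! i, e ∈ dirEdges V i := by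
  revert he
  refine Sym2.inductionOn e (fun a b => ?_)
  intro hab
  have hadj : (cubeGraph V).Adj a b := by
    rwa [SimpleGraph.mem_edgeFinset, SimpleGraph.mem_edgeSet] at hab
  obtain ⟨i, hi, hj⟩ := exists_dir hadj
  refine ⟨i, mem_dirEdges.mpr ⟨hadj, hi⟩, fun i' hi' => ?_⟩
  obtain ⟨_, hd'⟩ := mem_dirEdges.mp hi'
  by_contra hne
  exact hd' (hj i' hne)

lemma key_term (hdc : DownClosed V) (i : Fin n) {e : Sym2 {u : Vtx n // u ∈ V}}
    (he : e ∈ dirEdges V i) :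
    ((Sym2.lift ⟨fun u v => ((closerCount (cubeGraph V) u v : ℤ) -
        (closerCount (cubeGraph V) v u : ℤ)).natAbs,
      fun a b => by
        show (_ - _ : ℤ).natAbs = (_ - _ : ℤ).natAbs
        rw [← Int.natAbs_neg, neg_sub]⟩ e : ℕ) : ℤ)
      = (V.card : ℤ) - 2 * ((dirEdges V i).card : ℤ) := by
  revert he
  refine Sym2.inductionOn e (fun a b => ?_)
  intro hab
  obtain ⟨hadj, hd⟩ := mem_dirEdges.mp hab
  have hj := adj_dir hadj i hd
  rw [Sym2.lift_mk]
  show ((((closerCount (cubeGraph V) a b : ℤ) -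
      (closerCount (cubeGraph V) b a : ℤ)).natAbs : ℕ) : ℤ) = _
  have h1 : closerCount (cubeGraph V) a b = (V.filter fun w => w i = a.1 i).card :=
    closerCount_eq hdc i hd hj
  have h2 : closerCount (cubeGraph V) b a = (V.filter fun w => w i = b.1 i).card :=
    closerCount_eq hdc i (Ne.symm hd) (fun j hj' => (hj j hj').symm)
  have hle := count_le (V := V) hdc i
  have hadd := count_add (V := V) i
  have hE := dirEdges_card (V := V) hdc i
  rw [h1, h2]
  rcases Bool.eq_false_or_eq_true (a.1 i) with ha | ha
  · have hb : b.1 i = false := by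
      rcases Bool.eq_false_or_eq_true (b.1 i) with hbv | hbv
      · exact absurd (ha.trans hbv.symm) hd
      · exact hbv
    rw [ha, hb, hE]
    generalize (V.filter fun w => w i = false).card = cf at hadd hle ⊢
    generalize (V.filter fun w => w i = true).card = ct at hadd hle ⊢
    clear h1 h2 hE hab
    omega
  · have hb : b.1 i = true := by
      rcases Bool.eq_false_or_eq_true (b.1 i) with hbv | hbv
      · exact hbv
      · exact absurd (ha.trans hbv.symm) hd
    rw [ha, hb, hE]
    generalize (V.filter fun w => w i = false).card = cf at hadd hle ⊢
    generalize (V.filter fun w => w i = true).card = ct at hadd hle ⊢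
    clear h1 h2 hE hab
    omega

/-- For a daisy cube `G`, with `|E_i|` the number of edges using
direction `i`: `Mo(G) = |V(G)|·|E(G)| - 2·∑_{i=1}^n |E_i|²`. -/
theorem daisy_mostar_formula {n : ℕ} (V : Finset (Vtx n))
    (hne : V.Nonempty) (hdc : DownClosed V) :
    (mostar (cubeGraph V) : ℤ) =
      (V.card : ℤ) * ((cubeGraph V).edgeFinset.card : ℤ) -
        2 * ∑ i : Fin n, ((dirEdges V i).card : ℤ) ^ 2 := by
  classical
  have hsplit : ∀ (f : Sym2 {u : Vtx n // u ∈ V} → ℤ),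
      ∑ e ∈ (cubeGraph V).edgeFinset, f e = ∑ i : Fin n, ∑ e ∈ dirEdges V i, f e := by
    intro f
    have hfe : ∀ i : Fin n, ∑ e ∈ dirEdges V i, f e
        = ∑ e ∈ (cubeGraph V).edgeFinset, if e ∈ dirEdges V i then f e else 0 := by
      intro i
      rw [← Finset.sum_filter]
      congr 1
      ext e
      constructor
      · intro h
        exact Finset.mem_filter.mpr ⟨Finset.filter_subset _ _ h, h⟩
      · intro h
        exact (Finset.mem_filter.mp h).2
    rw [Finset.sum_congr rfl (fun i _ => hfe i), Finset.sum_comm]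
    apply Finset.sum_congr rfl
    intro e he
    obtain ⟨i₀, hi₀, huniq⟩ := dir_unique he
    rw [Finset.sum_eq_single i₀]
    · rw [if_pos hi₀]
    · intro b _ hb
      rw [if_neg (fun hmem => hb (huniq b hmem))]
    · intro h
      exact absurd (Finset.mem_univ i₀) h
  unfold mostar
  rw [Nat.cast_sum, hsplit]
  have hinner : ∀ i : Fin n, (∑ e ∈ dirEdges V i, ((Sym2.lift ⟨fun u v =>
        ((closerCount (cubeGraph V) u v : ℤ) - (closerCount (cubeGraph V) v u : ℤ)).natAbs,
      fun a b => by
        show (_ - _ : ℤ).natAbs = (_ - _ : ℤ).natAbs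
        rw [← Int.natAbs_neg, neg_sub]⟩ e : ℕ) : ℤ))
      = ((dirEdges V i).card : ℤ) * ((V.card : ℤ) - 2 * ((dirEdges V i).card : ℤ)) := by
    intro i
    rw [Finset.sum_congr rfl (fun e he => key_term hdc i he), Finset.sum_const,
      nsmul_eq_mul]
  rw [Finset.sum_congr rfl (fun i _ => hinner i)]
  have hEcard : ((cubeGraph V).edgeFinset.card : ℤ) = ∑ i : Fin n, ((dirEdges V i).card : ℤ) := by
    simpa using hsplit (fun _ => (1 : ℤ))
  rw [hEcard, Finset.mul_sum, Finset.mul_sum, ← Finset.sum_sub_distrib]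
  apply Finset.sum_congr rfl
  intro i _
  ring
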